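/- arXiv:1805.08037 — 11 statements merged into one kernel-verified Lean document; each statement's English description precedes it below -/
import Mathlib

section
/- For all sets A, B, C of solution mappings, (A ⋈ B) ⋈ C = A ⋈ (B ⋈ C); that is, the SPARQL inner join (Basic Graph Pattern join) is associative. -/
/-- Two solution mappings are compatible if they agree wherever both are bound. -/
def Compatible {V D : Type*} (μ₁ μ₂ : V → Option D) : Prop :=
  ∀ v, μ₁ v = none ∨ μ₂ v = none ∨ μ₁ v = μ₂ v

/-- Merge of two solution mappings: the left binding takes precedence. -/
def mergeMap {V D : Type*} (μ₁ μ₂ : V → Option D) : V → Option D :=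
  fun v => (μ₁ v).orElse (fun _ => μ₂ v)

/-- SPARQL inner join of two sets of solution mappings. -/
def joinSet {V D : Type*} (A B : Set (V → Option D)) : Set (V → Option D) :=
  {μ | ∃ μ₁ ∈ A, ∃ μ₂ ∈ B, Compatible μ₁ μ₂ ∧ μ = mergeMap μ₁ μ₂}

/-- SPARQL difference: mappings in A with no compatible partner in B. -/
def diffSet {V D : Type*} (A B : Set (V → Option D)) : Set (V → Option D) :=
  {μ₁ ∈ A | ∀ μ₂ ∈ B, ¬ Compatible μ₁ μ₂}

/-- SPARQL left outer join (OPTIONAL). -/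
def leftJoinSet {V D : Type*} (A B : Set (V → Option D)) : Set (V → Option D) :=
  joinSet A B ∪ diffSet A B

/-- Semi-join: mappings in A having some compatible partner in B. -/
def semiJoin {V D : Type*} (A B : Set (V → Option D)) : Set (V → Option D) :=
  {μ₁ ∈ A | ∃ μ₂ ∈ B, Compatible μ₁ μ₂}

/-- Subsumption order: μ₂ binds everything μ₁ binds, to the same value. -/
def Subsumes {V D : Type*} (μ₁ μ₂ : V → Option D) : Prop :=
  ∀ v, μ₁ v ≠ none → μ₂ v = μ₁ v

/-- best-match: the subsumption-maximal elements of X. -/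
def bestMatch {V D : Type*} (X : Set (V → Option D)) : Set (V → Option D) :=
  {μ ∈ X | ∀ μ' ∈ X, Subsumes μ μ' → μ' = μ}


section Helpers
variable {V D : Type*}

lemma merge_assoc (a b c : V → Option D) :
    mergeMap (mergeMap a b) c = mergeMap a (mergeMap b c) := by
  funext v
  simp [mergeMap]
  cases a v <;> simp

lemma compat_merge_left {a b c : V → Option D} (hab : Compatible a b)
    (h : Compatible (mergeMap a b) c) :
    Compatible b c ∧ Compatible a (mergeMap b c) := by
  constructor <;> intro v <;>
    have h1 := hab v <;> have h2 := h v <;>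
    cases hav : a v <;> cases hbv : b v <;> cases hcv : c v <;>
    simp_all [mergeMap]

lemma compat_merge_right {b c a : V → Option D} (hbc : Compatible b c)
    (h : Compatible a (mergeMap b c)) :
    Compatible a b ∧ Compatible (mergeMap a b) c := by
  constructor <;> intro v <;>
    have h1 := hbc v <;> have h2 := h v <;>
    cases hav : a v <;> cases hbv : b v <;> cases hcv : c v <;>
    simp_all [mergeMap]

end Helpers

theorem join_assoc (V D : Type*) (A B C : Set (V → Option D)) :
    joinSet (joinSet A B) C = joinSet A (joinSet B C) := by
  ext μ
  constructor
  · rintro ⟨μ₁₂, ⟨μ₁, h1, μ₂, h2, h12, rfl⟩, μ₃, h3, hc, rfl⟩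
    obtain ⟨hc23, hc1⟩ := compat_merge_left h12 hc
    exact ⟨μ₁, h1, mergeMap μ₂ μ₃, ⟨μ₂, h2, μ₃, h3, hc23, rfl⟩, hc1,
      merge_assoc μ₁ μ₂ μ₃⟩
  · rintro ⟨μ₁, h1, μ₂₃, ⟨μ₂, h2, μ₃, h3, h23, rfl⟩, hc, rfl⟩
    obtain ⟨hc12, hc3⟩ := compat_merge_right h23 hc
    exact ⟨mergeMap μ₁ μ₂, ⟨μ₁, h1, μ₂, h2, hc12, rfl⟩, μ₃, h3, hc3,
      (merge_assoc μ₁ μ₂ μ₃).symm⟩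
end

section
/- For all sets A, B, C of solution mappings, (A ∪ B) ⟕ C = (A ⟕ C) ∪ (B ⟕ C); that is, the left outer join distributes over union in its left argument (UNION rewrite rule 1 for bringing a BGP-OPT-UNION query into Union Normal Form). -/
theorem leftjoin_union_left_distrib (V D : Type*) (A B C : Set (V → Option D)) :
    leftJoinSet (A ∪ B) C = leftJoinSet A C ∪ leftJoinSet B C := by
  have hj : joinSet (A ∪ B) C = joinSet A C ∪ joinSet B C := by
    ext μ
    simp only [joinSet, Set.mem_union, Set.mem_setOf_eq]
    constructor
    · rintro ⟨μ₁, (h | h), rest⟩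
      · exact Or.inl ⟨μ₁, h, rest⟩
      · exact Or.inr ⟨μ₁, h, rest⟩
    · rintro (⟨μ₁, h, rest⟩ | ⟨μ₁, h, rest⟩)
      · exact ⟨μ₁, Or.inl h, rest⟩
      · exact ⟨μ₁, Or.inr h, rest⟩
  have hd : diffSet (A ∪ B) C = diffSet A C ∪ diffSet B C := by
    ext μ
    simp only [diffSet, Set.mem_union, Set.mem_setOf_eq, Set.mem_sep_iff]
    tauto
  simp only [leftJoinSet, hj, hd]
  ext μ
  simp only [Set.mem_union]
  tauto
end

section
/- There exist types V and D and sets A, B, C of solution mappings such that A ⟕ (B ∪ C) ≠ (A ⟕ B) ∪ (A ⟕ C); that is, rewriting P₁ ⟕ (P₂ ∪ P₃) as (P₁ ⟕ P₂) ∪ (P₁ ⟕ P₃) is not an equivalence under conventional union (UNION rewrite rule 3 can change the result set). -/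
theorem leftjoin_union_right_not_distrib :
    ∃ (V D : Type) (A B C : Set (V → Option D)),
      leftJoinSet A (B ∪ C) ≠ leftJoinSet A B ∪ leftJoinSet A C := by
  classical
  refine ⟨Bool, Bool, {fun v => if v then some true else none},
    {fun v => if v then some false else none},
    {fun v => if v then none else some true}, ?_⟩
  set a : Bool → Option Bool := fun v => if v then some true else none with ha
  set b : Bool → Option Bool := fun v => if v then some false else none with hb
  set c : Bool → Option Bool := fun v => if v then none else some true with hc
  intro h
  have hac : Compatible a c := by
    intro v; cases v
    · left; simp [ha]
    · right; left; simp [hc]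
  have hnab : ¬ Compatible a b := by
    intro hcab
    have := hcab true
    simp [ha, hb] at this
  have hrhs : a ∈ leftJoinSet {a} {b} ∪ leftJoinSet {a} {c} := by
    left; right
    refine ⟨rfl, ?_⟩
    intro μ₂ hμ₂
    rw [Set.mem_singleton_iff] at hμ₂
    subst hμ₂; exact hnab
  rw [← h] at hrhs
  rcases hrhs with hj | hd
  · obtain ⟨μ₁, hμ₁, μ₂, hμ₂, hcomp, heq⟩ := hj
    rw [Set.mem_singleton_iff] at hμ₁
    subst hμ₁
    rcases hμ₂ with h2 | h2 <;> rw [Set.mem_singleton_iff] at h2 <;> subst h2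
    · exact hnab hcomp
    · have := congrFun heq false
      simp [ha, hc, mergeMap] at this
  · obtain ⟨-, hno⟩ := hd
    exact hno c (Or.inr rfl) hac
end

section
/- For all sets A, B, C of solution mappings, A ⟕ (B ∪ C) ⊆ (A ⟕ B) ∪ (A ⟕ C); that is, the Union Normal Form rewrite of P₁ ⟕ (P₂ ∪ P₃) never loses results of the original pattern. -/
theorem leftjoin_union_right_subset (V D : Type*) (A B C : Set (V → Option D)) :
    leftJoinSet A (B ∪ C) ⊆ leftJoinSet A B ∪ leftJoinSet A C := by
  intro μ hμ
  rcases hμ with ⟨μ₁, h₁, μ₂, h₂, hc, he⟩ | ⟨h₁, h₂⟩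
  · rcases h₂ with h₂ | h₂
    · exact Or.inl (Or.inl ⟨μ₁, h₁, μ₂, h₂, hc, he⟩)
    · exact Or.inr (Or.inl ⟨μ₁, h₁, μ₂, h₂, hc, he⟩)
  · exact Or.inl (Or.inr ⟨h₁, fun μ₂ hB => h₂ μ₂ (Or.inl hB)⟩)
end

section
/- For all sets A, B, C of solution mappings, every mapping μ ∈ (A ⟕ B) ∪ (A ⟕ C) satisfies μ ⊑ μ' for some μ' ∈ A ⟕ (B ∪ C); that is, every result produced by the Union Normal Form rewrite of P₁ ⟕ (P₂ ∪ P₃) is subsumed by (or equal to) a result of the original pattern. -/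
theorem unf_rewrite_subsumed (V D : Type*) (A B C : Set (V → Option D)) :
    ∀ μ ∈ leftJoinSet A B ∪ leftJoinSet A C,
      ∃ μ' ∈ leftJoinSet A (B ∪ C), Subsumes μ μ' := by
  have key : ∀ B' C' : Set (V → Option D), ∀ μ ∈ leftJoinSet A B',
      ∃ μ' ∈ leftJoinSet A (B' ∪ C'), Subsumes μ μ' := by
    intro B' C' μ hμ
    rcases hμ with ⟨μ₁, h₁, μ₂, h₂, hc, rfl⟩ | ⟨h₁, hno⟩
    · exact ⟨mergeMap μ₁ μ₂, Or.inl ⟨μ₁, h₁, μ₂, Or.inl h₂, hc, rfl⟩,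
        fun v h => rfl⟩
    · by_cases h : ∃ μ₂ ∈ C', Compatible μ μ₂
      · obtain ⟨μ₂, h₂, hc⟩ := h
        refine ⟨mergeMap μ μ₂, Or.inl ⟨μ, h₁, μ₂, Or.inr h₂, hc, rfl⟩, ?_⟩
        intro v hv
        simp only [mergeMap, Option.orElse]
        cases hμv : μ v with
        | none => exact absurd hμv hv
        | some d => rfl
      · refine ⟨μ, Or.inr ⟨h₁, ?_⟩, fun v _ => rfl⟩
        rintro μ₂ (h₂ | h₂) hc
        · exact hno μ₂ h₂ hc
        · exact h ⟨μ₂, h₂, hc⟩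
  rintro μ (hμ | hμ)
  · exact key B C μ hμ
  · obtain ⟨μ', hμ', hs⟩ := key C B μ hμ
    rw [Set.union_comm] at hμ'
    exact ⟨μ', hμ', hs⟩
end

section
/- For all sets A, B, C of solution mappings, best-match(A ⟕ (B ∪ C)) = best-match((A ⟕ B) ∪ (A ⟕ C)); that is, under minimum union (union followed by removal of subsumed results), the rewrite of P₁ ⟕ (P₂ ∪ P₃) as (P₁ ⟕ P₂) ∪ (P₁ ⟕ P₃) produces exactly the same non-subsumed results as the original pattern. -/
lemma Subsumes.refl' {V D : Type*} (μ : V → Option D) : Subsumes μ μ := fun _ _ => rfl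

lemma Subsumes.trans' {V D : Type*} {μ₁ μ₂ μ₃ : V → Option D}
    (h₁ : Subsumes μ₁ μ₂) (h₂ : Subsumes μ₂ μ₃) : Subsumes μ₁ μ₃ := by
  intro v hv
  rw [h₂ v (by rw [h₁ v hv]; exact hv), h₁ v hv]

lemma Subsumes.antisymm' {V D : Type*} {μ₁ μ₂ : V → Option D}
    (h₁ : Subsumes μ₁ μ₂) (h₂ : Subsumes μ₂ μ₁) : μ₁ = μ₂ := by
  funext v
  by_cases hv : μ₁ v = none
  · by_cases hv2 : μ₂ v = none
    · rw [hv, hv2]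
    · exact h₂ v hv2
  · exact (h₁ v hv).symm

lemma subsumes_merge {V D : Type*} (μ₁ μ₂ : V → Option D) :
    Subsumes μ₁ (mergeMap μ₁ μ₂) := by
  intro v hv
  unfold mergeMap
  cases h : μ₁ v with
  | none => exact absurd h hv
  | some a => simp [Option.orElse]

lemma bestMatch_eq_of_dominated {V D : Type*} {X Y : Set (V → Option D)}
    (hXY : X ⊆ Y) (hdom : ∀ μ ∈ Y, ∃ μ'' ∈ X, Subsumes μ μ'') :
    bestMatch X = bestMatch Y := by
  ext μ
  constructor
  · rintro ⟨hμX, hmax⟩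
    refine ⟨hXY hμX, ?_⟩
    intro μ' hμ'Y hsub
    obtain ⟨μ'', hμ''X, hsub'⟩ := hdom μ' hμ'Y
    have : μ'' = μ := hmax μ'' hμ''X (hsub.trans' hsub')
    subst this
    exact Subsumes.antisymm' hsub' hsub
  · rintro ⟨hμY, hmax⟩
    obtain ⟨μ'', hμ''X, hsub⟩ := hdom μ hμY
    have hμμ : μ'' = μ := hmax μ'' (hXY hμ''X) hsub
    subst hμμ
    exact ⟨hμ''X, fun μ' hμ'X hs => hmax μ' (hXY hμ'X) hs⟩

theorem bestMatch_unf_rewrite (V D : Type*) (A B C : Set (V → Option D)) :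
    bestMatch (leftJoinSet A (B ∪ C)) = bestMatch (leftJoinSet A B ∪ leftJoinSet A C) := by
  apply bestMatch_eq_of_dominated
  · -- X = leftJoinSet A (B ∪ C) ⊆ Y
    rintro μ (⟨μ₁, hμ₁, μ₂, (hB | hC), hc, rfl⟩ | ⟨hA, hd⟩)
    · exact Or.inl (Or.inl ⟨μ₁, hμ₁, μ₂, hB, hc, rfl⟩)
    · exact Or.inr (Or.inl ⟨μ₁, hμ₁, μ₂, hC, hc, rfl⟩)
    · exact Or.inl (Or.inr ⟨hA, fun μ₂ h => hd μ₂ (Or.inl h)⟩)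
  · -- every μ ∈ Y is subsumed by something in X
    rintro μ ((⟨μ₁, hμ₁, μ₂, hB, hc, rfl⟩ | ⟨hA, hd⟩) | (⟨μ₁, hμ₁, μ₂, hC, hc, rfl⟩ | ⟨hA, hd⟩))
    · exact ⟨_, Or.inl ⟨μ₁, hμ₁, μ₂, Or.inl hB, hc, rfl⟩, Subsumes.refl' _⟩
    · by_cases hC : ∃ μ₂ ∈ C, Compatible μ μ₂
      · obtain ⟨μ₂, hμ₂, hc⟩ := hC
        exact ⟨mergeMap μ μ₂, Or.inl ⟨μ, hA, μ₂, Or.inr hμ₂, hc, rfl⟩, subsumes_merge μ μ₂⟩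
      · push_neg at hC
        refine ⟨μ, Or.inr ⟨hA, ?_⟩, Subsumes.refl' _⟩
        rintro μ₂ (h | h)
        · exact hd μ₂ h
        · exact hC μ₂ h
    · exact ⟨_, Or.inl ⟨μ₁, hμ₁, μ₂, Or.inr hC, hc, rfl⟩, Subsumes.refl' _⟩
    · by_cases hB : ∃ μ₂ ∈ B, Compatible μ μ₂
      · obtain ⟨μ₂, hμ₂, hc⟩ := hB
        exact ⟨mergeMap μ μ₂, Or.inl ⟨μ, hA, μ₂, Or.inl hμ₂, hc, rfl⟩, subsumes_merge μ μ₂⟩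
      · push_neg at hB
        refine ⟨μ, Or.inr ⟨hA, ?_⟩, Subsumes.refl' _⟩
        rintro μ₂ (h | h)
        · exact hB μ₂ h
        · exact hd μ₂ h
end

section
/- Let A and B be sets of solution mappings and let R : (V → Option D) → Prop be a filter condition such that for every μ₁ ∈ A and every mapping μ with μ₁ ⊑ μ, R μ holds if and only if R μ₁ holds (a safe filter whose value is determined by the bindings present in the mappings of A). Then {μ ∈ A ⟕ B | R μ} = {μ ∈ A | R μ} ⟕ B; that is, a safe FILTER can be pushed into the master pattern of a well-designed OPTIONAL: (P₁ ⟕ P₂)𝓕(R) ≡ (P₁𝓕(R)) ⟕ P₂ (FILTER rewrite rule 4). -/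
theorem filter_pushin (V D : Type*) (A B : Set (V → Option D))
    (R : (V → Option D) → Prop)
    (hsafe : ∀ μ₁ ∈ A, ∀ μ : V → Option D, Subsumes μ₁ μ → (R μ ↔ R μ₁)) :
    {μ ∈ leftJoinSet A B | R μ} = leftJoinSet {μ ∈ A | R μ} B := by
  have key : ∀ μ₁ μ₂ : V → Option D, Subsumes μ₁ (mergeMap μ₁ μ₂) := by
    intro μ₁ μ₂ v h
    simp [mergeMap]
    cases hv : μ₁ v with
    | none => exact absurd hv h
    | some d => simp [Option.orElse]
  ext μ
  simp only [Set.mem_setOf_eq, leftJoinSet, joinSet, diffSet, Set.mem_union,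
    Set.mem_setOf_eq]
  constructor
  · rintro ⟨h | ⟨hA, hd⟩, hR⟩
    · obtain ⟨μ₁, hμ₁, μ₂, hμ₂, hc, rfl⟩ := h
      exact Or.inl ⟨μ₁, ⟨hμ₁, ((hsafe μ₁ hμ₁ _ (key μ₁ μ₂)).mp hR)⟩, μ₂, hμ₂, hc, rfl⟩
    · exact Or.inr ⟨⟨hA, hR⟩, hd⟩
  · rintro (⟨μ₁, ⟨hμ₁, hR₁⟩, μ₂, hμ₂, hc, rfl⟩ | ⟨⟨hA, hR⟩, hd⟩)
    · exact ⟨Or.inl ⟨μ₁, hμ₁, μ₂, hμ₂, hc, rfl⟩,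
        (hsafe μ₁ hμ₁ _ (key μ₁ μ₂)).mpr hR₁⟩
    · exact ⟨Or.inr ⟨hA, fun μ₂ h2 => hd μ₂ h2⟩, hR⟩
end

section
/- Let A and B be sets of solution mappings and set A' = A ⋉ B and B' = B ⋉ A. Then A' ⋈ B' = A ⋈ B, and every μ ∈ A' ∪ B' satisfies μ ⊑ ρ for some ρ ∈ A ⋈ B; that is, one round of mutual semi-joins preserves the join results and leaves both operands minimal: every remaining mapping participates in some final join result. -/
theorem mutual_semijoin_minimal (V D : Type*) (A B : Set (V → Option D))
    (A' B' : Set (V → Option D)) (hA : A' = semiJoin A B) (hB : B' = semiJoin B A) :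
    joinSet A' B' = joinSet A B ∧
    ∀ μ ∈ A' ∪ B', ∃ ρ ∈ joinSet A B, Subsumes μ ρ := by
  subst hA hB
  constructor
  · ext μ
    constructor
    · rintro ⟨μ₁, ⟨h₁, -⟩, μ₂, ⟨h₂, -⟩, hc, rfl⟩
      exact ⟨μ₁, h₁, μ₂, h₂, hc, rfl⟩
    · rintro ⟨μ₁, h₁, μ₂, h₂, hc, rfl⟩
      refine ⟨μ₁, ⟨h₁, μ₂, h₂, hc⟩, μ₂, ⟨h₂, μ₁, h₁, fun v => ?_⟩, hc, rfl⟩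
      rcases hc v with h | h | h
      · exact Or.inr (Or.inl h)
      · exact Or.inl h
      · exact Or.inr (Or.inr h.symm)
  · rintro μ (⟨hμ, μ₂, h₂, hc⟩ | ⟨hμ, μ₁, h₁, hc⟩)
    · refine ⟨mergeMap μ μ₂, ⟨μ, hμ, μ₂, h₂, hc, rfl⟩, fun v hv => ?_⟩
      cases h : μ v with
      | none => exact absurd h hv
      | some a => simp [mergeMap, h]
    · refine ⟨mergeMap μ₁ μ, ⟨μ₁, h₁, μ, hμ, fun v => ?_, rfl⟩, fun v hv => ?_⟩
      · rcases hc v with h | h | h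
        · exact Or.inr (Or.inl h)
        · exact Or.inl h
        · exact Or.inr (Or.inr h.symm)
      · rcases hc v with h | h | h
        · exact absurd h hv
        · simp [mergeMap, h]
        · cases h2 : μ v <;> simp [mergeMap, ← h, h2]
end

section
/- For all sets A and B of solution mappings, A ⟕ (B ⋉ A) = A ⟕ B; that is, pruning a slave (OPTIONAL) pattern by transferring variable-binding constraints from its master via a semi-join does not change the results of the left outer join. -/
theorem slave_semijoin_prune_leftjoin (V D : Type*) (A B : Set (V → Option D)) :
    leftJoinSet A (semiJoin B A) = leftJoinSet A B := by
  have hsym : ∀ (μ₁ μ₂ : V → Option D), Compatible μ₁ μ₂ → Compatible μ₂ μ₁ := by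
    intro μ₁ μ₂ h v
    rcases h v with h | h | h
    · exact Or.inr (Or.inl h)
    · exact Or.inl h
    · exact Or.inr (Or.inr h.symm)
  ext μ
  constructor
  · rintro (⟨μ₁, h₁, μ₂, ⟨hB, -⟩, hc, rfl⟩ | ⟨h₁, h₂⟩)
    · exact Or.inl ⟨μ₁, h₁, μ₂, hB, hc, rfl⟩
    · refine Or.inr ⟨h₁, fun μ₂ hB hc => h₂ μ₂ ⟨hB, μ, h₁, hsym _ _ hc⟩ hc⟩
  · rintro (⟨μ₁, h₁, μ₂, hB, hc, rfl⟩ | ⟨h₁, h₂⟩)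
    · exact Or.inl ⟨μ₁, h₁, μ₂, ⟨hB, μ₁, h₁, hsym _ _ hc⟩, hc, rfl⟩
    · exact Or.inr ⟨h₁, fun μ₂ hm hc => h₂ μ₂ hm.1 hc⟩
end

section
/- Let A, B, C be sets of solution mappings and S_A, S_B, S_C ⊆ V be such that every mapping in A has support S_A, every mapping in B has support S_B, every mapping in C has support S_C, and S_A ∩ S_C ⊆ S_B (a path-shaped acyclic join query A–B–C). Define B₁ = B ⋉ C, A₁ = A ⋉ B₁, B₂ = B₁ ⋉ A₁, and C₁ = C ⋉ B₂ (a bottom-up pass of semi-joins followed by a top-down pass along the path). Then (A₁ ⋈ B₂) ⋈ C₁ = (A ⋈ B) ⋈ C; that is, the full-reducer semi-join sequence preserves the join results. -/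
lemma Compatible.symm' {V D : Type*} {μ₁ μ₂ : V → Option D}
    (h : Compatible μ₁ μ₂) : Compatible μ₂ μ₁ := by
  intro v; rcases h v with h | h | h
  · exact Or.inr (Or.inl h)
  · exact Or.inl h
  · exact Or.inr (Or.inr h.symm)

lemma compat_bc {V D : Type*} {μa μb μc : V → Option D}
    (hab : Compatible μa μb) (h : Compatible (mergeMap μa μb) μc) :
    Compatible μb μc := by
  intro v
  rcases h v with h1 | h1 | h1
  · simp [mergeMap, Option.orElse_eq_none] at h1
    exact Or.inl h1.2
  · exact Or.inr (Or.inl h1)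
  · by_cases hbv : μb v = none
    · exact Or.inl hbv
    by_cases hav : μa v = none
    · refine Or.inr (Or.inr ?_)
      rw [← h1]; simp [mergeMap, hav]
    · refine Or.inr (Or.inr ?_)
      rcases hab v with h2 | h2 | h2
      · exact absurd h2 hav
      · exact absurd h2 hbv
      · rw [← h2, ← h1]; simp [mergeMap, Option.orElse_eq_some]
        cases h : μa v with
        | none => exact absurd h hav
        | some a => simp

lemma semiJoin_subset {V D : Type*} (A B : Set (V → Option D)) :
    semiJoin A B ⊆ A := fun _ h => h.1

theorem full_reducer_preserves_join (V D : Type*)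
    (A B C : Set (V → Option D)) (SA SB SC : Set V)
    (hA : ∀ μ ∈ A, {v | μ v ≠ none} = SA)
    (hB : ∀ μ ∈ B, {v | μ v ≠ none} = SB)
    (hC : ∀ μ ∈ C, {v | μ v ≠ none} = SC)
    (hpath : SA ∩ SC ⊆ SB)
    (B₁ A₁ B₂ C₁ : Set (V → Option D))
    (hB₁ : B₁ = semiJoin B C) (hA₁ : A₁ = semiJoin A B₁)
    (hB₂ : B₂ = semiJoin B₁ A₁) (hC₁ : C₁ = semiJoin C B₂) :
    joinSet (joinSet A₁ B₂) C₁ = joinSet (joinSet A B) C := by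
  subst hB₁ hA₁ hB₂ hC₁
  ext μ
  constructor
  · rintro ⟨μ₁, ⟨μa, ha, μb, hb, hab, rfl⟩, μc, hc, h1, rfl⟩
    exact ⟨mergeMap μa μb, ⟨μa, (semiJoin_subset _ _) ha,
      μb, (semiJoin_subset _ _) ((semiJoin_subset _ _) hb), hab, rfl⟩,
      μc, (semiJoin_subset _ _) hc, h1, rfl⟩
  · rintro ⟨μ₁, ⟨μa, ha, μb, hb, hab, rfl⟩, μc, hc, h1, rfl⟩
    have hbc : Compatible μb μc := compat_bc hab h1
    have hbB1 : μb ∈ semiJoin B C := ⟨hb, μc, hc, hbc⟩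
    have haA1 : μa ∈ semiJoin A (semiJoin B C) := ⟨ha, μb, hbB1, hab⟩
    have hbB2 : μb ∈ semiJoin (semiJoin B C) (semiJoin A (semiJoin B C)) :=
      ⟨hbB1, μa, haA1, hab.symm'⟩
    have hcC1 : μc ∈ semiJoin C _ := ⟨hc, μb, hbB2, hbc.symm'⟩
    exact ⟨mergeMap μa μb, ⟨μa, haA1, μb, hbB2, hab, rfl⟩, μc, hcC1, h1, rfl⟩
end

section
/- Let A, B, C be sets of solution mappings and S_A, S_B, S_C ⊆ V be such that every mapping in A has support S_A, every mapping in B has support S_B, every mapping in C has support S_C, and S_A ∩ S_C ⊆ S_B (a path-shaped acyclic join query A–B–C). Define B₁ = B ⋉ C, A₁ = A ⋉ B₁, B₂ = B₁ ⋉ A₁, and C₁ = C ⋉ B₂ (a bottom-up pass of semi-joins followed by a top-down pass along the path). Then every μ ∈ A₁ ∪ B₂ ∪ C₁ satisfies μ ⊑ ρ for some ρ ∈ (A ⋈ B) ⋈ C; that is, after the two semi-join passes each operand is left with minimal mappings: every remaining mapping participates in some final join result. -/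
lemma merge_eq_left {V D : Type*} {a b : V → Option D} {v : V} (h : a v ≠ none) :
    mergeMap a b v = a v := by
  rcases hv : a v with _ | d
  · exact absurd hv h
  · simp [mergeMap, hv]

lemma merge_eq_right {V D : Type*} {a b : V → Option D} {v : V} (h : a v = none) :
    mergeMap a b v = b v := by
  simp [mergeMap, h]

lemma aux_compat {V D : Type*} {SA SB SC : Set V}
    (hpath : SA ∩ SC ⊆ SB)
    {a b c : V → Option D}
    (hsa : {v | a v ≠ none} = SA) (hsb : {v | b v ≠ none} = SB)
    (hsc : {v | c v ≠ none} = SC)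
    (hab : Compatible a b) (hbc : Compatible b c) :
    Compatible (mergeMap a b) c := by
  intro v
  by_cases hcv : c v = none
  · exact Or.inr (Or.inl hcv)
  by_cases hbv : b v = none
  · have hav : a v = none := by
      by_contra hav
      have hvb : v ∈ SB := hpath ⟨hsa ▸ hav, hsc ▸ hcv⟩
      exact (hsb ▸ hvb) hbv
    exact Or.inl (by rw [merge_eq_right hav]; exact hbv)
  · right; right
    have hbceq : b v = c v := (hbc v).resolve_left hbv |>.resolve_left hcv
    rcases hab v with h | h | h
    · rw [merge_eq_right h]; exact hbceq
    · exact absurd h hbv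
    · rw [merge_eq_left (h ▸ hbv), h]; exact hbceq

lemma make_rho {V D : Type*} {A B C : Set (V → Option D)} {SA SB SC : Set V}
    (hA : ∀ μ ∈ A, {v | μ v ≠ none} = SA)
    (hB : ∀ μ ∈ B, {v | μ v ≠ none} = SB)
    (hC : ∀ μ ∈ C, {v | μ v ≠ none} = SC)
    (hpath : SA ∩ SC ⊆ SB)
    {a b c : V → Option D} (ha : a ∈ A) (hb : b ∈ B) (hc : c ∈ C)
    (hab : Compatible a b) (hbc : Compatible b c) :
    mergeMap (mergeMap a b) c ∈ joinSet (joinSet A B) C :=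
  ⟨mergeMap a b, ⟨a, ha, b, hb, hab, rfl⟩, c, hc,
    aux_compat hpath (hA a ha) (hB b hb) (hC c hc) hab hbc, rfl⟩

lemma subs_a {V D : Type*} {a b c : V → Option D} :
    Subsumes a (mergeMap (mergeMap a b) c) := by
  intro v hv
  rw [merge_eq_left (by rw [merge_eq_left hv]; exact hv), merge_eq_left hv]

lemma subs_b {V D : Type*} {a b c : V → Option D} (hab : Compatible a b) :
    Subsumes b (mergeMap (mergeMap a b) c) := by
  intro v hv
  have hm : mergeMap a b v = b v := by
    rcases hab v with h | h | h
    · exact merge_eq_right h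
    · exact absurd h hv
    · rw [merge_eq_left (h ▸ hv)]; exact h
  rw [merge_eq_left (hm ▸ hv), hm]

lemma subs_c {V D : Type*} {SA SB SC : Set V}
    (hpath : SA ∩ SC ⊆ SB)
    {a b c : V → Option D}
    (hsa : {v | a v ≠ none} = SA) (hsb : {v | b v ≠ none} = SB)
    (hsc : {v | c v ≠ none} = SC)
    (hab : Compatible a b) (hbc : Compatible b c) :
    Subsumes c (mergeMap (mergeMap a b) c) := by
  intro v hv
  rcases haux : mergeMap a b v with _ | d
  · rw [merge_eq_right haux]
  · have hne : mergeMap a b v ≠ none := by simp [haux]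
    rw [merge_eq_left hne]
    rcases aux_compat hpath hsa hsb hsc hab hbc v with h | h | h
    · exact absurd h hne
    · exact absurd h hv
    · exact h

theorem full_reducer_minimal (V D : Type*)
    (A B C : Set (V → Option D)) (SA SB SC : Set V)
    (hA : ∀ μ ∈ A, {v | μ v ≠ none} = SA)
    (hB : ∀ μ ∈ B, {v | μ v ≠ none} = SB)
    (hC : ∀ μ ∈ C, {v | μ v ≠ none} = SC)
    (hpath : SA ∩ SC ⊆ SB)
    (B₁ A₁ B₂ C₁ : Set (V → Option D))
    (hB₁ : B₁ = semiJoin B C) (hA₁ : A₁ = semiJoin A B₁)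
    (hB₂ : B₂ = semiJoin B₁ A₁) (hC₁ : C₁ = semiJoin C B₂) :
    ∀ μ ∈ A₁ ∪ B₂ ∪ C₁, ∃ ρ ∈ joinSet (joinSet A B) C, Subsumes μ ρ := by
  subst hB₁ hA₁ hB₂ hC₁
  rintro μ (⟨hμ | hμ⟩ | hμ)
  · obtain ⟨ha, b, ⟨hb, c, hc, hbc⟩, hab⟩ := hμ
    exact ⟨_, make_rho hA hB hC hpath ha hb hc hab hbc, subs_a⟩
  · obtain ⟨⟨hb, c, hc, hbc⟩, a, ⟨ha, _⟩, hba⟩ := hμ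
    have hab : Compatible a μ := fun v => by
      rcases hba v with h | h | h
      · exact Or.inr (Or.inl h)
      · exact Or.inl h
      · exact Or.inr (Or.inr h.symm)
    exact ⟨_, make_rho hA hB hC hpath ha hb hc hab hbc, subs_b hab⟩
  · obtain ⟨hc, b, ⟨⟨hb, _⟩, a, ⟨ha, _⟩, hba⟩, hcb⟩ := hμ
    have hab : Compatible a b := fun v => by
      rcases hba v with h | h | h
      · exact Or.inr (Or.inl h)
      · exact Or.inl h
      · exact Or.inr (Or.inr h.symm)
    have hbc : Compatible b μ := fun v => by
      rcases hcb v with h | h | h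
      · exact Or.inr (Or.inl h)
      · exact Or.inl h
      · exact Or.inr (Or.inr h.symm)
    exact ⟨_, make_rho hA hB hC hpath ha hb hc hab hbc,
      subs_c hpath (hA a ha) (hB b hb) (hC μ hc) hab hbc⟩
end
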